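/- arXiv:1202.1129 — 5 statements merged into one kernel-verified Lean document; each statement's English description precedes it below -/
import Mathlib

section
/- Let A be a unital topological algebra, and for n ∈ ℕ let μ_n^{sym}(x_1,…,x_n) := (1/n!) ∑_{σ ∈ S_n} x_{σ(1)}⋯x_{σ(n)} be the symmetrization of the n-fold multiplication map, and π_n(x) := x^n. Then for continuous seminorms p, q on A, ‖μ_n^{sym}‖_{p,q} ≤ (n^n / n!) · ‖π_n‖_{p,q}, where ‖π_n‖_{p,q} := sup{p(x^n) : q(x) ≤ 1}. -/
/-!
STATEMENT 2: `‖μ_n^{sym}‖_{p,q} ≤ (n^n / n!) ‖π_n‖_{p,q}` for the symmetrized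
multiplication map `μ_n^{sym}` and the power map `π_n(x) = x^n`.
-/

open scoped ENNReal

/-- The symmetrization `μ_n^{sym}(x₁,…,xₙ) = (1/n!) ∑_{σ ∈ S_n} x_{σ(1)} ⋯ x_{σ(n)}`. -/
noncomputable def muSym {A : Type*} [Ring A] [Algebra ℂ A] (n : ℕ) (x : Fin n → A) : A :=
  (Nat.factorial n : ℂ)⁻¹ • ∑ σ : Equiv.Perm (Fin n), (List.ofFn (x ∘ σ)).prod

/-- `‖μ_n^{sym}‖_{p,q}`. -/
noncomputable def muSymNorm {A : Type*} [Ring A] [Algebra ℂ A]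
    (p q : Seminorm ℂ A) (n : ℕ) : ℝ≥0∞ :=
  ⨆ x : {x : Fin n → A // ∀ i, q (x i) ≤ 1}, ENNReal.ofReal (p (muSym n x.1))

/-- `‖π_n‖_{p,q} = sup {p (x^n) : q x ≤ 1}`. -/
noncomputable def piNorm {A : Type*} [Ring A] [Algebra ℂ A]
    (p q : Seminorm ℂ A) (n : ℕ) : ℝ≥0∞ :=
  ⨆ x : {x : A // q x ≤ 1}, ENNReal.ofReal (p (x.1 ^ n))

namespace Stmt2Aux

open Finset

/-- Sign of a boolean: `+1` or `-1`. -/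
def sg (b : Bool) : ℤ := if b then 1 else -1

section Ring
variable {A : Type*} [Ring A]

lemma listProd_smul : ∀ (n : ℕ) (c : Fin n → ℤ) (z : Fin n → A),
    (List.ofFn fun k => c k • z k).prod = (∏ k, c k) • (List.ofFn z).prod
  | 0, c, z => by simp
  | (n+1), c, z => by
    rw [List.ofFn_succ, List.ofFn_succ, List.prod_cons, List.prod_cons,
      listProd_smul n (fun k => c k.succ) (fun k => z k.succ),
      smul_mul_smul_comm, Fin.prod_univ_succ]

lemma sum_pow_expand {ι : Type*} [Fintype ι] : ∀ (n : ℕ) (y : ι → A),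
    (∑ i, y i) ^ n = ∑ f : Fin n → ι, (List.ofFn (y ∘ f)).prod
  | 0, y => by simp
  | (n+1), y => by
    have h : ∑ f : Fin (n+1) → ι, (List.ofFn (y ∘ f)).prod
        = ∑ p : ι × (Fin n → ι), y p.1 * (List.ofFn (y ∘ p.2)).prod :=
      Fintype.sum_equiv (Fin.consEquiv fun _ => ι).symm _ _ (fun f => by
        rw [List.ofFn_succ, List.prod_cons]; rfl)
    rw [pow_succ', sum_pow_expand n y, Finset.mul_sum, h, Fintype.sum_prod_type]
    rw [Finset.sum_comm]
    exact Finset.sum_congr rfl fun f _ => Finset.sum_mul _ _ _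

end Ring

lemma sum_prod_bool {ι : Type*} [Fintype ι] [DecidableEq ι] (g : ι → Bool → ℤ) :
    ∑ s : ι → Bool, ∏ i, g i (s i) = ∏ i, (g i true + g i false) := by
  have : ∀ i : ι, g i true + g i false = ∑ b : Bool, g i b := by
    intro i; rw [Fintype.sum_bool]
  simp_rw [this]
  rw [Finset.prod_univ_sum (fun _ => (univ : Finset Bool)) g, Fintype.piFinset_univ]

lemma coeff_eq (n : ℕ) (f : Fin n → Fin n) :
    ∑ s : Fin n → Bool, ((∏ i, sg (s i)) * ∏ k, sg (s (f k))) =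
      if Function.Bijective f then 2 ^ n else 0 := by
  classical
  set m : Fin n → ℕ := fun i => (univ.filter fun k => f k = i).card with hm
  have h1 : ∀ s : Fin n → Bool, ((∏ i, sg (s i)) * ∏ k, sg (s (f k))) =
      ∏ i, sg (s i) ^ (m i + 1) := by
    intro s
    have h2 : ∏ k, sg (s (f k)) = ∏ i, sg (s i) ^ m i := by
      rw [← Finset.prod_fiberwise_of_maps_to (t := univ) (g := f)
        (fun k _ => mem_univ _) (fun k => sg (s (f k)))]
      refine Finset.prod_congr rfl fun i _ => ?_
      rw [Finset.prod_congr rfl (g := fun _ => sg (s i)) (fun k hk => by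
        rw [(Finset.mem_filter.1 hk).2]), Finset.prod_const, hm]
    rw [h2, ← Finset.prod_mul_distrib]
    exact Finset.prod_congr rfl fun i _ => by rw [pow_succ']
  simp_rw [h1]
  rw [sum_prod_bool (fun i b => sg b ^ (m i + 1))]
  by_cases hf : Function.Bijective f
  · rw [if_pos hf]
    have hmi : ∀ i, m i = 1 := by
      intro i
      obtain ⟨k, hk, hk'⟩ := hf.existsUnique i
      rw [hm]
      refine Finset.card_eq_one.2 ⟨k, ?_⟩
      ext j; simp only [Finset.mem_filter, mem_univ, true_and, Finset.mem_singleton]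
      exact ⟨fun h => hk' j h, fun h => h ▸ hk⟩
    simp [sg, hmi]
  · rw [if_neg hf]
    have : ¬ Function.Surjective f := fun hs =>
      hf (Finite.surjective_iff_bijective.1 hs)
    rw [Function.Surjective] at this; push_neg at this
    obtain ⟨i, hi⟩ := this
    refine Finset.prod_eq_zero (mem_univ i) ?_
    have : m i = 0 := by
      rw [hm]; simp only [Finset.card_eq_zero]
      ext k; simp only [Finset.mem_filter, mem_univ, true_and, Finset.notMem_empty,
        iff_false]
      exact hi k
    simp [sg, this]

variable {A : Type*} [Ring A]

lemma polarization (n : ℕ) (x : Fin n → A) :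
    ∑ s : Fin n → Bool, (∏ i, sg (s i)) • (∑ i, sg (s i) • x i) ^ n =
      (2 ^ n : ℤ) • ∑ σ : Equiv.Perm (Fin n), (List.ofFn (x ∘ σ)).prod := by
  classical
  have step1 : ∀ s : Fin n → Bool,
      (∑ i, sg (s i) • x i) ^ n =
        ∑ f : Fin n → Fin n, (∏ k, sg (s (f k))) • (List.ofFn (x ∘ f)).prod := by
    intro s
    rw [sum_pow_expand n (fun i => sg (s i) • x i)]
    exact Finset.sum_congr rfl fun f _ => listProd_smul n _ _
  simp_rw [step1, Finset.smul_sum, smul_smul]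
  rw [Finset.sum_comm]
  simp_rw [← Finset.sum_smul, coeff_eq]
  simp_rw [ite_smul, zero_smul, ← Finset.sum_filter]
  refine (Finset.sum_bij (fun (σ : Equiv.Perm (Fin n)) _ => (σ : Fin n → Fin n))
    (fun σ _ => ?_) (fun σ₁ _ σ₂ _ h => ?_) (fun f hf => ?_) (fun σ _ => rfl)).symm
  · exact Finset.mem_filter.2 ⟨mem_univ _, σ.bijective⟩
  · exact Equiv.coe_fn_injective h
  · have hf' := (Finset.mem_filter.1 hf).2
    exact ⟨Equiv.ofBijective f hf', mem_univ _, rfl⟩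

variable [Algebra ℂ A]

lemma pow_bound (p q : Seminorm ℂ A) (n : ℕ) (hn : 1 ≤ n) (C : ℝ)
    (hC : ∀ x : A, q x ≤ 1 → p (x ^ n) ≤ C) (y : A) : p (y ^ n) ≤ C * q y ^ n := by
  rcases (apply_nonneg q y).eq_or_lt with h0 | h0
  · have hz : (0:ℝ) ^ n = 0 := zero_pow (by omega)
    rw [← h0, hz, mul_zero]
    by_contra hlt
    push_neg at hlt
    obtain ⟨k, hk⟩ := Archimedean.arch (C + 1) hlt
    have hk1 : 1 ≤ (k : ℝ) := by
      by_contra hk1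
      push_neg at hk1
      have hk0 : k = 0 := by exact_mod_cast Nat.lt_one_iff.1 (by exact_mod_cast hk1)
      have hC0 : p (y ^ n) ≤ C := hC y (by rw [← h0]; exact zero_le_one)
      rw [hk0] at hk
      simp at hk
      nlinarith
    have hq : q (((k : ℝ) : ℂ) • y) ≤ 1 := by
      rw [map_smul_eq_mul, ← h0, mul_zero]; exact zero_le_one
    have := hC _ hq
    rw [smul_pow, map_smul_eq_mul] at this
    have hnorm : ‖(((k : ℝ) : ℂ)) ^ n‖ = (k : ℝ) ^ n := by
      rw [norm_pow, Complex.norm_real, Real.norm_eq_abs, abs_of_nonneg (by positivity)]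
    rw [hnorm] at this
    have h2 : (k : ℝ) ≤ (k : ℝ) ^ n := le_self_pow₀ hk1 (by omega)
    have h3 : (k : ℝ) * p (y ^ n) ≤ (k : ℝ) ^ n * p (y ^ n) :=
      mul_le_mul_of_nonneg_right h2 (le_of_lt hlt)
    have h4 : C + 1 ≤ (k : ℝ) * p (y ^ n) := by
      simpa [nsmul_eq_mul] using hk
    linarith
  · set c : ℂ := ((q y : ℝ) : ℂ)⁻¹ with hc
    have hq : q (c • y) ≤ 1 := by
      rw [map_smul_eq_mul, hc, norm_inv, Complex.norm_real, Real.norm_eq_abs,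
        abs_of_pos h0, inv_mul_cancel₀ (ne_of_gt h0)]
    have := hC _ hq
    rw [smul_pow, map_smul_eq_mul, norm_pow, hc, norm_inv, Complex.norm_real,
      Real.norm_eq_abs, abs_of_pos h0] at this
    have hpos : (0:ℝ) < q y ^ n := by positivity
    calc p (y ^ n) = q y ^ n * ((q y)⁻¹ ^ n * p (y ^ n)) := by
          rw [← mul_assoc, ← mul_pow, mul_inv_cancel₀ (ne_of_gt h0), one_pow, one_mul]
        _ ≤ q y ^ n * C := by
          apply mul_le_mul_of_nonneg_left _ (le_of_lt hpos)
          simpa using this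
        _ = C * q y ^ n := mul_comm _ _

lemma abs_prod_sg (n : ℕ) (s : Fin n → Bool) : |∏ i, sg (s i)| = 1 := by
  rw [Finset.abs_prod]
  refine Finset.prod_eq_one fun i _ => ?_
  cases s i <;> simp [sg]

/-- Seminorm of an integer smul. -/
lemma seminorm_zsmul (p : Seminorm ℂ A) (m : ℤ) (a : A) :
    p (m • a) = |(m : ℝ)| * p a := by
  rw [← Int.cast_smul_eq_zsmul ℂ m a, map_smul_eq_mul]
  simp

lemma key_bound (p q : Seminorm ℂ A) (n : ℕ) (hn : 1 ≤ n) (C : ℝ) (hC0 : 0 ≤ C)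
    (hC : ∀ x : A, q x ≤ 1 → p (x ^ n) ≤ C) (x : Fin n → A) (hx : ∀ i, q (x i) ≤ 1) :
    p (muSym n x) ≤ (n : ℝ) ^ n / (Nat.factorial n : ℝ) * C := by
  classical
  set S : A := ∑ σ : Equiv.Perm (Fin n), (List.ofFn (x ∘ σ)).prod with hS
  -- bound p S via polarization
  have hpol := polarization n x
  have hqy : ∀ s : Fin n → Bool, q (∑ i, sg (s i) • x i) ≤ (n : ℝ) := by
    intro s
    calc q (∑ i, sg (s i) • x i) ≤ ∑ i, q (sg (s i) • x i) :=
          Finset.le_sum_of_subadditive q (map_zero q).le (map_add_le_add q) _ _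
      _ ≤ ∑ _i : Fin n, (1 : ℝ) := by
          refine Finset.sum_le_sum fun i _ => ?_
          rw [seminorm_zsmul]
          have : |((sg (s i) : ℤ) : ℝ)| = 1 := by cases s i <;> simp [sg]
          rw [this, one_mul]; exact hx i
      _ = (n : ℝ) := by simp
  have hterm : ∀ s : Fin n → Bool,
      p ((∏ i, sg (s i)) • (∑ i, sg (s i) • x i) ^ n) ≤ C * (n : ℝ) ^ n := by
    intro s
    rw [seminorm_zsmul]
    have h1 : |((∏ i, sg (s i) : ℤ) : ℝ)| = 1 := by
      rw [← Int.cast_abs, abs_prod_sg]; norm_num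
    rw [h1, one_mul]
    calc p ((∑ i, sg (s i) • x i) ^ n) ≤ C * q (∑ i, sg (s i) • x i) ^ n :=
          pow_bound p q n hn C hC _
      _ ≤ C * (n : ℝ) ^ n := by
          refine mul_le_mul_of_nonneg_left ?_ hC0
          exact pow_le_pow_left₀ (apply_nonneg _ _) (hqy s) n
  have hpS : (2 : ℝ) ^ n * p S ≤ (2 : ℝ) ^ n * (C * (n : ℝ) ^ n) := by
    have hlhs : p ((2 ^ n : ℤ) • S) = (2 : ℝ) ^ n * p S := by
      rw [seminorm_zsmul]; norm_num
    rw [← hlhs, ← hpol]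
    calc p (∑ s : Fin n → Bool, (∏ i, sg (s i)) • (∑ i, sg (s i) • x i) ^ n)
        ≤ ∑ s : Fin n → Bool, p ((∏ i, sg (s i)) • (∑ i, sg (s i) • x i) ^ n) :=
          Finset.le_sum_of_subadditive p (map_zero p).le (map_add_le_add p) _ _
      _ ≤ ∑ _s : Fin n → Bool, C * (n : ℝ) ^ n :=
          Finset.sum_le_sum fun s _ => hterm s
      _ = (2 : ℝ) ^ n * (C * (n : ℝ) ^ n) := by
          rw [Finset.sum_const, Finset.card_univ, Fintype.card_fun]
          simp [nsmul_eq_mul]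
  have hpS' : p S ≤ C * (n : ℝ) ^ n :=
    le_of_mul_le_mul_left (by exact hpS) (by positivity)
  have hmu : p (muSym n x) = (Nat.factorial n : ℝ)⁻¹ * p S := by
    rw [muSym, map_smul_eq_mul, ← hS]
    congr 1
    rw [norm_inv]
    norm_num
  rw [hmu]
  have hfact : (0:ℝ) < (Nat.factorial n : ℝ) := by
    exact_mod_cast Nat.factorial_pos n
  rw [div_mul_eq_mul_div, ← mul_comm C ((n:ℝ)^n)]
  rw [le_div_iff₀ hfact, mul_comm _ (Nat.factorial n : ℝ), ← mul_assoc]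
  rw [mul_inv_cancel₀ (ne_of_gt hfact), one_mul]
  exact hpS'

end Stmt2Aux

theorem stmt2 {A : Type*} [Ring A] [Algebra ℂ A]
    [TopologicalSpace A] [IsTopologicalRing A] [ContinuousSMul ℂ A]
    (p q : Seminorm ℂ A) (hp : Continuous p) (hq : Continuous q) (n : ℕ) (hn : 1 ≤ n) :
    muSymNorm p q n ≤
      ENNReal.ofReal ((n : ℝ) ^ n / (Nat.factorial n : ℝ)) * piNorm p q n := by
  have hcoef : (0:ℝ) < (n : ℝ) ^ n / (Nat.factorial n : ℝ) := by
    have h1 : (0:ℝ) < (n : ℝ) := by exact_mod_cast hn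
    have h2 : (0:ℝ) < (Nat.factorial n : ℝ) := by exact_mod_cast Nat.factorial_pos n
    positivity
  by_cases hfin : piNorm p q n = ⊤
  · rw [hfin, ENNReal.mul_top (by simp [ENNReal.ofReal_pos.2 hcoef, ne_of_gt])]
    exact le_top
  · set C := (piNorm p q n).toReal with hCdef
    have hC0 : 0 ≤ C := ENNReal.toReal_nonneg
    have hC : ∀ x : A, q x ≤ 1 → p (x ^ n) ≤ C := by
      intro x hx
      have h1 : ENNReal.ofReal (p (x ^ n)) ≤ piNorm p q n :=
        le_iSup (fun z : {x : A // q x ≤ 1} => ENNReal.ofReal (p (z.1 ^ n)))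
          (⟨x, hx⟩ : {x : A // q x ≤ 1})
      have h2 := ENNReal.toReal_mono hfin h1
      rwa [ENNReal.toReal_ofReal (apply_nonneg _ _)] at h2
    refine iSup_le fun x => ?_
    calc ENNReal.ofReal (p (muSym n x.1))
        ≤ ENNReal.ofReal ((n : ℝ) ^ n / (Nat.factorial n : ℝ) * C) :=
          ENNReal.ofReal_le_ofReal
            (Stmt2Aux.key_bound p q n hn C hC0 hC x.1 x.2)
      _ = ENNReal.ofReal ((n : ℝ) ^ n / (Nat.factorial n : ℝ)) * ENNReal.ofReal C :=
          ENNReal.ofReal_mul (le_of_lt hcoef)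
      _ ≤ ENNReal.ofReal ((n : ℝ) ^ n / (Nat.factorial n : ℝ)) * piNorm p q n := by
          gcongr
          exact ENNReal.ofReal_toReal_le
end

section
/- Let A be a unital topological algebra and p a continuous seminorm. Suppose there exist a continuous seminorm q and s > 0 such that ∑_{n≥1} s^n ‖π_n‖_{p,q} < ∞, where π_n(x) = x^n. Then for every t ∈ (0, s/e), ∑_{n≥1} t^n ‖μ_n^{sym}‖_{p,q} < ∞, where μ_n^{sym} is the symmetrized n-fold multiplication map. -/
/-!
STATEMENT 3: if `∑_{n≥1} s^n ‖π_n‖_{p,q} < ∞` for some `s > 0`, then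
`∑_{n≥1} t^n ‖μ_n^{sym}‖_{p,q} < ∞` for every `t ∈ (0, s/e)`.
-/

open scoped ENNReal

section helpers
variable {A : Type*} [Ring A] [Algebra ℂ A]

lemma seminorm_sum_le {ι : Type*} (p : Seminorm ℂ A) (s : Finset ι) (f : ι → A) :
    p (∑ i ∈ s, f i) ≤ ∑ i ∈ s, p (f i) := by
  induction s using Finset.cons_induction with
  | empty => simp
  | cons a s ha ih =>
    rw [Finset.sum_cons, Finset.sum_cons]
    exact (map_add_le_add p _ _).trans (by gcongr)

lemma pow_sum_eq (N m : ℕ) (y : Fin N → A) :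
    (∑ i, y i) ^ m = ∑ f : Fin m → Fin N, (List.ofFn (y ∘ f)).prod := by
  induction m with
  | zero => simp
  | succ m ih =>
    have reix : ∑ f : Fin (m+1) → Fin N, (List.ofFn (y ∘ f)).prod
        = ∑ p : Fin N × (Fin m → Fin N), (List.ofFn (y ∘ Fin.cons p.1 p.2)).prod :=
      (Fintype.sum_equiv (Fin.consEquiv fun _ => Fin N)
        (fun p => (List.ofFn (y ∘ Fin.cons p.1 p.2)).prod)
        (fun f => (List.ofFn (y ∘ f)).prod) (fun p => rfl)).symm
    rw [pow_succ', ih, Finset.mul_sum, reix, Fintype.sum_prod_type]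
    simp_rw [Finset.sum_mul]
    rw [Finset.sum_comm]
    refine Finset.sum_congr rfl fun i _ => Finset.sum_congr rfl fun f _ => ?_
    simp [List.ofFn_succ, Function.comp_def, List.prod_cons]

lemma ofFn_smul_prod (m : ℕ) (c : Fin m → ℂ) (z : Fin m → A) :
    (List.ofFn fun j => c j • z j).prod = (∏ j, c j) • (List.ofFn z).prod := by
  induction m with
  | zero => simp
  | succ m ih =>
    rw [List.ofFn_succ, List.ofFn_succ, List.prod_cons, List.prod_cons,
      ih (fun j => c j.succ) (fun j => z j.succ), Fin.prod_univ_succ,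
      smul_mul_smul_comm]
end helpers

noncomputable def sgn (b : Bool) : ℂ := if b then 1 else -1

lemma norm_sgn (b : Bool) : ‖sgn b‖ = 1 := by cases b <;> simp [sgn]

section polar
variable {A : Type*} [Ring A] [Algebra ℂ A]

lemma sign_polarization (n : ℕ) (x : Fin n → A) :
    ∑ ε : Fin n → Bool, (∏ i, sgn (ε i)) • (∑ i, sgn (ε i) • x i) ^ n
      = ((2 : ℂ) ^ n) • ∑ σ : Equiv.Perm (Fin n), (List.ofFn (x ∘ σ)).prod := by
  classical
  set P : (Fin n → Fin n) → A := fun f => (List.ofFn (x ∘ f)).prod with hP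
  set m : (Fin n → Fin n) → Fin n → ℕ :=
    fun f i => (Finset.univ.filter fun j => f j = i).card with hm
  have expand : ∀ ε : Fin n → Bool,
      (∑ i, sgn (ε i) • x i) ^ n = ∑ f : Fin n → Fin n, (∏ j, sgn (ε (f j))) • P f := by
    intro ε
    rw [pow_sum_eq]
    refine Finset.sum_congr rfl fun f _ => ?_
    have : (fun j => sgn (ε (f j)) • x (f j)) = fun j => sgn ((ε ∘ f) j) • (x ∘ f) j := rfl
    simp only [Function.comp_def]
    exact ofFn_smul_prod n (fun j => sgn (ε (f j))) (fun j => x (f j))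
  have fiber : ∀ (ε : Fin n → Bool) (f : Fin n → Fin n),
      (∏ j, sgn (ε (f j))) = ∏ i, sgn (ε i) ^ m f i := by
    intro ε f
    rw [← Finset.prod_fiberwise_of_maps_to (fun j _ => Finset.mem_univ (f j))
      (fun j => sgn (ε (f j)))]
    refine Finset.prod_congr rfl fun i _ => ?_
    rw [show (∏ j ∈ Finset.univ.filter fun j => f j = i, sgn (ε (f j)))
        = ∏ j ∈ Finset.univ.filter fun j => f j = i, sgn (ε i) from
      Finset.prod_congr rfl fun j hj => by
        rw [(Finset.mem_filter.mp hj).2]]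
    rw [Finset.prod_const]
  have coef : ∀ f : Fin n → Fin n,
      (∑ ε : Fin n → Bool, (∏ i, sgn (ε i)) * ∏ j, sgn (ε (f j)))
        = ∏ i, ((1 : ℂ) ^ (m f i + 1) + (-1) ^ (m f i + 1)) := by
    intro f
    have : ∀ ε : Fin n → Bool,
        (∏ i, sgn (ε i)) * ∏ j, sgn (ε (f j)) = ∏ i, sgn (ε i) ^ (m f i + 1) := by
      intro ε
      rw [fiber ε f, ← Finset.prod_mul_distrib]
      exact Finset.prod_congr rfl fun i _ => (pow_succ' _ _).symm
    simp_rw [this]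
    rw [show (∑ ε : Fin n → Bool, ∏ i, sgn (ε i) ^ (m f i + 1))
        = ∑ ε ∈ Fintype.piFinset (fun _ : Fin n => (Finset.univ : Finset Bool)),
          ∏ i, sgn (ε i) ^ (m f i + 1) by rw [Fintype.piFinset_univ]]
    rw [← Finset.prod_univ_sum (fun _ : Fin n => (Finset.univ : Finset Bool))
      (fun i b => sgn b ^ (m f i + 1))]
    refine Finset.prod_congr rfl fun i _ => ?_
    simp [sgn, Fintype.sum_bool]
  have coef_bij : ∀ f : Fin n → Fin n, Function.Bijective f →
      (∏ i, ((1 : ℂ) ^ (m f i + 1) + (-1) ^ (m f i + 1))) = 2 ^ n := by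
    intro f hf
    have hm1 : ∀ i, m f i = 1 := by
      intro i
      obtain ⟨j, hj⟩ := hf.surjective i
      have : (Finset.univ.filter fun k => f k = i) = {j} := by
        ext k
        simp only [Finset.mem_filter, Finset.mem_univ, true_and, Finset.mem_singleton]
        exact ⟨fun h => hf.injective (h.trans hj.symm), fun h => h ▸ hj⟩
      simp [hm, this]
    simp [hm1]
    norm_num
  have coef_nbij : ∀ f : Fin n → Fin n, ¬ Function.Bijective f →
      (∏ i, ((1 : ℂ) ^ (m f i + 1) + (-1) ^ (m f i + 1))) = 0 := by
    intro f hf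
    have hns : ¬ Function.Surjective f :=
      fun h => hf ⟨Finite.injective_iff_surjective.mpr h, h⟩
    rw [Function.Surjective] at hns
    push_neg at hns
    obtain ⟨i, hi⟩ := hns
    refine Finset.prod_eq_zero (Finset.mem_univ i) ?_
    have : m f i = 0 := by
      rw [hm]
      simp only [Finset.card_eq_zero, Finset.filter_eq_empty_iff]
      intro j _
      exact hi j
    rw [this]
    norm_num
  calc ∑ ε : Fin n → Bool, (∏ i, sgn (ε i)) • (∑ i, sgn (ε i) • x i) ^ n
      = ∑ ε : Fin n → Bool, ∑ f : Fin n → Fin n,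
          ((∏ i, sgn (ε i)) * ∏ j, sgn (ε (f j))) • P f := by
        refine Finset.sum_congr rfl fun ε _ => ?_
        rw [expand ε, Finset.smul_sum]
        exact Finset.sum_congr rfl fun f _ => smul_smul _ _ _
    _ = ∑ f : Fin n → Fin n,
          (∑ ε : Fin n → Bool, (∏ i, sgn (ε i)) * ∏ j, sgn (ε (f j))) • P f := by
        rw [Finset.sum_comm]
        exact Finset.sum_congr rfl fun f _ => (Finset.sum_smul).symm
    _ = ∑ f : Fin n → Fin n, (if Function.Bijective f then ((2:ℂ)^n) • P f else 0) := by
        refine Finset.sum_congr rfl fun f _ => ?_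
        rw [coef f]
        by_cases hf : Function.Bijective f
        · rw [if_pos hf, coef_bij f hf]
        · rw [if_neg hf, coef_nbij f hf, zero_smul]
    _ = ∑ f ∈ Finset.univ.filter (fun f : Fin n → Fin n => Function.Bijective f),
          ((2:ℂ)^n) • P f := (Finset.sum_filter _ _).symm
    _ = ∑ g : {f : Fin n → Fin n // Function.Bijective f}, ((2:ℂ)^n) • P g.1 := by
        exact Finset.sum_subtype _ (by simp) _
    _ = ∑ σ : Equiv.Perm (Fin n), ((2:ℂ)^n) • P σ := by
        refine (Fintype.sum_equiv
          (⟨fun σ => ⟨⇑σ, σ.bijective⟩, fun g => Equiv.ofBijective g.1 g.2,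
            fun σ => Equiv.ext fun i => rfl, fun g => Subtype.ext rfl⟩ :
            Equiv.Perm (Fin n) ≃ {f : Fin n → Fin n // Function.Bijective f})
          _ _ (fun σ => rfl)).symm
    _ = ((2:ℂ)^n) • ∑ σ : Equiv.Perm (Fin n), (List.ofFn (x ∘ σ)).prod := by
        rw [Finset.smul_sum]
end polar

section estimate
variable {A : Type*} [Ring A] [Algebra ℂ A]

lemma muSymNorm_le (p q : Seminorm ℂ A) (n : ℕ) (hn : 0 < n) :
    muSymNorm p q n ≤ ENNReal.ofReal ((n : ℝ) ^ n / n.factorial) * piNorm p q n := by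
  rw [muSymNorm]
  refine iSup_le fun x => ?_
  have hnz : ((n : ℂ)) ≠ 0 := Nat.cast_ne_zero.mpr hn.ne'
  have h2 : ((2 : ℂ) ^ n) ≠ 0 := pow_ne_zero n two_ne_zero
  have hfac : ((n.factorial : ℂ)) ≠ 0 := Nat.cast_ne_zero.mpr n.factorial_ne_zero
  have key : muSym n x.1 = ((n.factorial : ℂ) * 2 ^ n)⁻¹ •
      ∑ ε : Fin n → Bool, (∏ i, sgn (ε i)) • (∑ i, sgn (ε i) • x.1 i) ^ n := by
    have hσ : (∑ σ : Equiv.Perm (Fin n), (List.ofFn (x.1 ∘ σ)).prod)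
        = ((2:ℂ)^n)⁻¹ • ∑ ε : Fin n → Bool,
            (∏ i, sgn (ε i)) • (∑ i, sgn (ε i) • x.1 i) ^ n := by
      rw [sign_polarization n x.1, inv_smul_smul₀ h2]
    rw [muSym, hσ, smul_smul, mul_inv]
  have perε : ∀ ε : Fin n → Bool,
      ENNReal.ofReal (p ((∑ i, sgn (ε i) • x.1 i) ^ n))
        ≤ ENNReal.ofReal ((n:ℝ)^n) * piNorm p q n := by
    intro ε
    set z := ∑ i, sgn (ε i) • x.1 i with hzdef
    set w := ((n:ℂ))⁻¹ • z with hwdef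
    have hz : z = (n:ℂ) • w := (smul_inv_smul₀ hnz z).symm
    have hqz : q z ≤ n := by
      refine (seminorm_sum_le q _ _).trans ?_
      calc ∑ i : Fin n, q (sgn (ε i) • x.1 i)
          = ∑ i : Fin n, ‖sgn (ε i)‖ * q (x.1 i) := by
            exact Finset.sum_congr rfl fun i _ => map_smul_eq_mul q _ _
        _ ≤ ∑ _i : Fin n, (1:ℝ) := by
            refine Finset.sum_le_sum fun i _ => ?_
            rw [norm_sgn, one_mul]; exact x.2 i
        _ = n := by simp
    have hqw : q w ≤ 1 := by
      have : q w = ‖((n:ℂ))⁻¹‖ * q z := map_smul_eq_mul q _ _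
      rw [this, norm_inv, Complex.norm_natCast]
      calc ((n:ℝ))⁻¹ * q z ≤ ((n:ℝ))⁻¹ * n := by
            refine mul_le_mul_of_nonneg_left hqz (by positivity)
        _ = 1 := inv_mul_cancel₀ (by exact_mod_cast hn.ne')
    have hpz : p (z ^ n) = (n:ℝ)^n * p (w ^ n) := by
      rw [hz, smul_pow, map_smul_eq_mul, norm_pow, Complex.norm_natCast]
    rw [hpz, ENNReal.ofReal_mul (by positivity)]
    exact mul_le_mul_right (le_iSup
      (fun y : {y : A // q y ≤ 1} => ENNReal.ofReal (p (y.1 ^ n))) ⟨w, hqw⟩) _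
  have hnorm_inv : ‖((n.factorial : ℂ) * 2 ^ n)⁻¹‖
      = (((n.factorial : ℝ)) * 2 ^ n)⁻¹ := by
    rw [norm_inv, norm_mul, norm_pow, Complex.norm_natCast]
    norm_num
  calc ENNReal.ofReal (p (muSym n x.1))
      ≤ ENNReal.ofReal ((((n.factorial:ℝ)) * 2 ^ n)⁻¹ *
          ∑ ε : Fin n → Bool, p ((∑ i, sgn (ε i) • x.1 i) ^ n)) := by
        refine ENNReal.ofReal_le_ofReal ?_
        rw [key, map_smul_eq_mul, hnorm_inv]
        refine mul_le_mul_of_nonneg_left ?_ (by positivity)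
        refine (seminorm_sum_le p _ _).trans ?_
        refine Finset.sum_le_sum fun ε _ => ?_
        rw [map_smul_eq_mul, norm_prod]
        have : (∏ i, ‖sgn (ε i)‖) = 1 :=
          Finset.prod_eq_one fun i _ => norm_sgn (ε i)
        rw [this, one_mul]
    _ = ENNReal.ofReal ((((n.factorial:ℝ)) * 2 ^ n)⁻¹) *
          ∑ ε : Fin n → Bool, ENNReal.ofReal (p ((∑ i, sgn (ε i) • x.1 i) ^ n)) := by
        rw [ENNReal.ofReal_mul (by positivity),
          ENNReal.ofReal_sum_of_nonneg (fun ε _ => apply_nonneg p _)]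
    _ ≤ ENNReal.ofReal ((((n.factorial:ℝ)) * 2 ^ n)⁻¹) *
          ∑ _ε : Fin n → Bool, (ENNReal.ofReal ((n:ℝ)^n) * piNorm p q n) := by
        exact mul_le_mul_right (Finset.sum_le_sum fun ε _ => perε ε) _
    _ = ENNReal.ofReal ((n : ℝ) ^ n / n.factorial) * piNorm p q n := by
        rw [Finset.sum_const]
        simp only [Finset.card_univ, Fintype.card_fun, Fintype.card_bool,
          Fintype.card_fin, nsmul_eq_mul]
        rw [← mul_assoc, ← mul_assoc]
        congr 1
        rw [show ((2^n : ℕ) : ℝ≥0∞) = ENNReal.ofReal ((2:ℝ)^n) by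
          rw [ENNReal.ofReal_pow (by norm_num)]; simp [ENNReal.ofReal_ofNat]]
        rw [← ENNReal.ofReal_mul (by positivity), ← ENNReal.ofReal_mul (by positivity)]
        congr 1
        have h2R : ((2:ℝ)^n) ≠ 0 := by positivity
        have hfR : ((n.factorial : ℝ)) ≠ 0 := by
          exact_mod_cast n.factorial_ne_zero
        field_simp
end estimate

theorem stmt3 {A : Type*} [Ring A] [Algebra ℂ A]
    [TopologicalSpace A] [IsTopologicalRing A] [ContinuousSMul ℂ A]
    (p q : Seminorm ℂ A) (hp : Continuous p) (hq : Continuous q)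
    (s : ℝ) (hs : 0 < s)
    (hsum : (∑' n : ℕ, ENNReal.ofReal s ^ (n + 1) * piNorm p q (n + 1)) ≠ ⊤) :
    ∀ t : ℝ, 0 < t → t < s / Real.exp 1 →
      (∑' n : ℕ, ENNReal.ofReal t ^ (n + 1) * muSymNorm p q (n + 1)) ≠ ⊤ := by
  intro t ht hts
  have hte : t * Real.exp 1 ≤ s := ((lt_div_iff₀ (Real.exp_pos 1)).mp hts).le
  have hkey : ∀ n : ℕ, ENNReal.ofReal t ^ (n+1) * muSymNorm p q (n+1)
      ≤ ENNReal.ofReal s ^ (n+1) * piNorm p q (n+1) := by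
    intro n
    set k := n + 1 with hk
    have h1 : muSymNorm p q k ≤ ENNReal.ofReal ((k:ℝ)^k / k.factorial) * piNorm p q k :=
      muSymNorm_le p q k n.succ_pos
    have he : (k:ℝ)^k / k.factorial ≤ Real.exp 1 ^ k := by
      have h3 : (k:ℝ)^k / k.factorial
          ≤ ∑ i ∈ Finset.range (k+1), (k:ℝ)^i / i.factorial :=
        Finset.single_le_sum (f := fun i => (k:ℝ)^i / (i.factorial : ℝ))
          (fun i _ => by positivity) (Finset.self_mem_range_succ k)
      calc (k:ℝ)^k / k.factorial ≤ _ := h3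
        _ ≤ Real.exp k := Real.sum_le_exp_of_nonneg (Nat.cast_nonneg k) (k+1)
        _ = Real.exp 1 ^ k := by rw [← Real.exp_nat_mul, mul_one]
    have hreal : t^k * ((k:ℝ)^k / k.factorial) ≤ s^k := by
      calc t^k * ((k:ℝ)^k / k.factorial) ≤ t^k * Real.exp 1 ^ k :=
            mul_le_mul_of_nonneg_left he (by positivity)
        _ = (t * Real.exp 1)^k := (mul_pow _ _ _).symm
        _ ≤ s^k := pow_le_pow_left₀ (by positivity) hte k
    calc ENNReal.ofReal t ^ k * muSymNorm p q k
        ≤ ENNReal.ofReal t ^ k * (ENNReal.ofReal ((k:ℝ)^k / k.factorial) * piNorm p q k) :=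
          mul_le_mul_right h1 _
      _ = ENNReal.ofReal (t^k * ((k:ℝ)^k / k.factorial)) * piNorm p q k := by
          rw [← ENNReal.ofReal_pow ht.le, ← mul_assoc, ← ENNReal.ofReal_mul (by positivity)]
      _ ≤ ENNReal.ofReal (s^k) * piNorm p q k := by
          exact mul_le_mul_left (ENNReal.ofReal_le_ofReal hreal) _
      _ = ENNReal.ofReal s ^ k * piNorm p q k := by rw [ENNReal.ofReal_pow hs.le]
  exact ne_top_of_le_ne_top hsum (ENNReal.tsum_le_tsum hkey)
end

section
/- Let F be a Mackey-complete complex locally convex space, p_n : E → F continuous homogeneous polynomials of degree n, x ∈ E, and r > 1 such that ∑_{n≥0} r^n p_n(x) converges in F. Then the partial sums (∑_{k=0}^n p_k(x))_{n∈ℕ} form a Mackey-Cauchy sequence in F and hence converge in F. -/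
/-!
STATEMENT 7: in a Mackey-complete complex locally convex space `F`, if `p_n` are
continuous homogeneous polynomials and `∑ r^n p_n(x)` converges for some `r > 1`,
then the partial sums `∑_{k≤n} p_k(x)` form a Mackey-Cauchy sequence and converge.
-/

open Filter
open scoped Pointwise

/-- A Mackey-Cauchy sequence: `x n - x m ∈ r n m • B` for some bounded set `B` and
nonnegative reals `r n m → 0`. -/
def MackeyCauchy {F : Type*} [AddCommGroup F] [Module ℂ F] [TopologicalSpace F]
    (x : ℕ → F) : Prop :=
  ∃ (B : Set F) (r : ℕ → ℕ → ℝ), Bornology.IsVonNBounded ℂ B ∧ (∀ n m, 0 ≤ r n m) ∧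
    Tendsto (fun nm : ℕ × ℕ => r nm.1 nm.2) atTop (nhds 0) ∧
    ∀ n m, x n - x m ∈ (r n m : ℂ) • B

/-- A locally convex space is Mackey-complete if every Mackey-Cauchy sequence converges. -/
def MackeyComplete (F : Type*) [AddCommGroup F] [Module ℂ F] [TopologicalSpace F] : Prop :=
  ∀ x : ℕ → F, MackeyCauchy x → ∃ l, Tendsto x atTop (nhds l)

lemma aux_convexHull_bounded {F : Type*} [AddCommGroup F] [Module ℂ F] [Module ℝ F]
    [IsScalarTower ℝ ℂ F] [TopologicalSpace F] [LocallyConvexSpace ℝ F] {s : Set F}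
    (hs : Bornology.IsVonNBounded ℂ s) :
    Bornology.IsVonNBounded ℂ (convexHull ℝ s) := by
  intro V hV
  obtain ⟨W, ⟨hWn, hWc⟩, hWV⟩ := (LocallyConvexSpace.convex_basis (𝕜 := ℝ) (0 : F)).mem_iff.1 hV
  refine ((hs hWn).eventually.mono fun a ha => ?_)
  have hconv : Convex ℝ (a • W) := by
    rw [← Set.image_smul]
    exact hWc.is_linear_image ⟨fun u v => smul_add a u v, fun c u => smul_comm a c u⟩
  exact (convexHull_min ha hconv).trans (Set.smul_set_mono hWV)

lemma aux_comb {F : Type*} [AddCommGroup F] [Module ℝ F] {B : Set F}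
    (hB : Convex ℝ B) (h0 : (0 : F) ∈ B) (t : Finset ℕ) (w : ℕ → ℝ) (z : ℕ → F)
    (hw : ∀ i ∈ t, 0 ≤ w i) (hz : ∀ i ∈ t, z i ∈ B) (hs : ∑ i ∈ t, w i ≤ 1) :
    ∑ i ∈ t, w i • z i ∈ B := by
  set s := ∑ i ∈ t, w i with hsdef
  have hs0 : 0 ≤ s := Finset.sum_nonneg hw
  rcases eq_or_lt_of_le hs0 with h | h
  · have : ∀ i ∈ t, w i = 0 := by
      intro i hi
      exact (Finset.sum_eq_zero_iff_of_nonneg hw).1 h.symm i hi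
    rw [Finset.sum_congr rfl (fun i hi => by rw [this i hi, zero_smul])]
    simpa using h0
  · have hz' : ∑ i ∈ t, (w i / s) • z i ∈ B := by
      apply hB.sum_mem (fun i hi => div_nonneg (hw i hi) hs0)
      · rw [← Finset.sum_div, ← hsdef, div_self h.ne']
      · exact hz
    have key : ∑ i ∈ t, w i • z i = s • ∑ i ∈ t, (w i / s) • z i + (1 - s) • (0 : F) := by
      rw [smul_zero, add_zero, Finset.smul_sum]
      refine Finset.sum_congr rfl fun i hi => ?_
      rw [smul_smul, mul_div_cancel₀ _ h.ne']
    rw [key]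
    exact hB hz' h0 hs0 (by linarith) (by ring)

lemma aux_mem_complex_smul {F : Type*} [AddCommGroup F] [Module ℂ F] [Module ℝ F]
    [IsScalarTower ℝ ℂ F] {c : ℝ} {B : Set F} {v : F} (h : v ∈ c • B) :
    v ∈ (c : ℂ) • B := by
  obtain ⟨b, hb, rfl⟩ := h
  exact ⟨b, hb, by show (c : ℂ) • b = c • b; rw [← Complex.coe_algebraMap, algebraMap_smul]⟩


theorem stmt7 {E F : Type*}
    [AddCommGroup E] [Module ℂ E] [TopologicalSpace E]
    [AddCommGroup F] [Module ℂ F] [TopologicalSpace F]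
    [IsTopologicalAddGroup F] [ContinuousSMul ℂ F]
    [Module ℝ F] [IsScalarTower ℝ ℂ F] [LocallyConvexSpace ℝ F]
    (hF : MackeyComplete F) (p : ℕ → E → F)
    (hpoly : ∀ n, ∃ β : ContinuousMultilinearMap ℂ (fun _ : Fin n => E) F,
      ∀ x, p n x = β fun _ => x)
    (x : E) (r : ℝ) (hr : 1 < r)
    (hconv : ∃ l, Tendsto (fun N => ∑ k ∈ Finset.range N, (r : ℂ) ^ k • p k x)
      atTop (nhds l)) :
    MackeyCauchy (fun N => ∑ k ∈ Finset.range N, p k x) ∧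
      ∃ l, Tendsto (fun N => ∑ k ∈ Finset.range N, p k x) atTop (nhds l) := by
  obtain ⟨l, hl⟩ := hconv
  set y : ℕ → F := fun k => (r : ℂ) ^ k • p k x with hy
  -- terms tend to 0
  have hy0 : Tendsto y atTop (nhds 0) := by
    have h1 := (hl.comp (tendsto_add_atTop_nat 1)).sub hl
    rw [sub_self] at h1
    convert h1 using 2 with k
    simp [Function.comp, Finset.sum_range_succ_sub_sum, hy]
  have hbdd : Bornology.IsVonNBounded ℂ (Set.range y) := hy0.isVonNBounded_range ℂ
  set B : Set F := convexHull ℝ (insert 0 (Set.range y ∪ -Set.range y)) with hB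
  have hBbdd : Bornology.IsVonNBounded ℂ B := by
    apply aux_convexHull_bounded
    rw [Set.insert_eq]
    exact (Bornology.isVonNBounded_singleton 0).union (hbdd.union hbdd.neg)
  have h0B : (0 : F) ∈ B := subset_convexHull ℝ _ (Set.mem_insert _ _)
  have hyB : ∀ k, y k ∈ B := fun k =>
    subset_convexHull ℝ _ (Set.mem_insert_of_mem _ (Set.mem_union_left _ ⟨k, rfl⟩))
  have hnyB : ∀ k, -y k ∈ B := fun k =>
    subset_convexHull ℝ _ (Set.mem_insert_of_mem _ (Set.mem_union_right _
      (Set.neg_mem_neg.2 ⟨k, rfl⟩)))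
  have hBconv : Convex ℝ B := convex_convexHull ℝ _
  set q : ℝ := r⁻¹ with hqdef
  have hr0 : (0:ℝ) < r := lt_trans one_pos hr
  have hq0 : 0 < q := inv_pos.2 hr0
  have hq1 : q < 1 := inv_lt_one_of_one_lt₀ hr
  set c : ℝ := (1 - q)⁻¹ with hcdef
  have hc0 : 0 < c := inv_pos.2 (by linarith)
  have hgeo : ∀ n : ℕ, ∑ j ∈ Finset.range n, q ^ j ≤ c := by
    intro n
    refine le_of_le_of_eq (Summable.sum_le_tsum (Finset.range n) (fun i _ => (pow_nonneg hq0.le i))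
      ⟨_, hasSum_geometric_of_lt_one hq0.le hq1⟩) ?_
    exact tsum_geometric_of_lt_one hq0.le hq1
  have key : ∀ (z : ℕ → F), (∀ k, z k ∈ B) → ∀ a b : ℕ,
      ∑ k ∈ Finset.Ico a b, (q ^ k) • z k ∈ (q ^ a * c) • B := by
    intro z hz a b
    have hρpos : 0 < q ^ a * c := mul_pos (pow_pos hq0 a) hc0
    refine ⟨∑ k ∈ Finset.Ico a b, (q ^ k / (q ^ a * c)) • z k, ?_, ?_⟩
    · apply aux_comb hBconv h0B _ _ _
        (fun i _ => div_nonneg (pow_nonneg hq0.le i) hρpos.le) (fun i _ => hz i)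
      rw [← Finset.sum_div, div_le_one hρpos]
      calc ∑ k ∈ Finset.Ico a b, q ^ k
          = ∑ j ∈ Finset.range (b - a), q ^ (a + j) := Finset.sum_Ico_eq_sum_range _ _ _
        _ = q ^ a * ∑ j ∈ Finset.range (b - a), q ^ j := by
            rw [Finset.mul_sum]; exact Finset.sum_congr rfl fun j _ => pow_add q a j
        _ ≤ q ^ a * c := by
            exact mul_le_mul_of_nonneg_left (hgeo _) (pow_nonneg hq0.le a)
    · show (q ^ a * c) • ∑ k ∈ Finset.Ico a b, (q ^ k / (q ^ a * c)) • z k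
        = ∑ k ∈ Finset.Ico a b, q ^ k • z k
      rw [Finset.smul_sum]
      exact Finset.sum_congr rfl fun k _ => by
        rw [smul_smul, mul_comm, div_mul_cancel₀ _ hρpos.ne']
  -- rewrite p k x in terms of y
  have hpq : ∀ k, (q ^ k : ℝ) • y k = p k x := by
    intro k
    have h1 : (q ^ k : ℝ) • y k = ((q ^ k : ℝ) : ℂ) • y k := by
      rw [← Complex.coe_algebraMap, algebraMap_smul]
    rw [h1, hy]
    have h2 : ((q ^ k : ℝ) : ℂ) = ((r : ℂ) ^ k)⁻¹ := by
      push_cast [hqdef]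
      rw [inv_pow]
    rw [h2, inv_smul_smul₀ (pow_ne_zero k (by exact_mod_cast hr0.ne'))]
  -- the Mackey-Cauchy structure
  set ρ : ℕ → ℕ → ℝ := fun n m => q ^ (min n m) * c with hρ
  have hρ0 : ∀ n m, 0 ≤ ρ n m := fun n m =>
    mul_nonneg (pow_nonneg hq0.le _) hc0.le
  have htend : Tendsto (fun nm : ℕ × ℕ => ρ nm.1 nm.2) atTop (nhds 0) := by
    have hmin : Tendsto (fun nm : ℕ × ℕ => min nm.1 nm.2) atTop atTop := by
      rw [tendsto_atTop]
      intro b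
      filter_upwards [eventually_ge_atTop ((b, b) : ℕ × ℕ)] with nm hnm
      exact le_min hnm.1 hnm.2
    have := ((tendsto_pow_atTop_nhds_zero_of_lt_one hq0.le hq1).comp hmin).mul_const c
    simpa using this
  have hmem : ∀ n m, (∑ k ∈ Finset.range n, p k x) - (∑ k ∈ Finset.range m, p k x)
      ∈ ((ρ n m : ℝ) : ℂ) • B := by
    intro n m
    rcases le_total m n with h | h
    · have hdiff : (∑ k ∈ Finset.range n, p k x) - (∑ k ∈ Finset.range m, p k x)
          = ∑ k ∈ Finset.Ico m n, (q ^ k : ℝ) • y k := by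
        rw [← Finset.sum_Ico_eq_sub _ h]
        exact Finset.sum_congr rfl fun k _ => (hpq k).symm
      rw [hdiff]
      apply aux_mem_complex_smul
      have := key y hyB m n
      simpa only [ρ, min_eq_right h] using this
    · have hdiff : (∑ k ∈ Finset.range n, p k x) - (∑ k ∈ Finset.range m, p k x)
          = ∑ k ∈ Finset.Ico n m, (q ^ k : ℝ) • (-y k) := by
        rw [← neg_sub, ← Finset.sum_Ico_eq_sub _ h, ← Finset.sum_neg_distrib]
        exact Finset.sum_congr rfl fun k _ => by rw [smul_neg, hpq k]
      rw [hdiff]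
      apply aux_mem_complex_smul
      have := key (fun k => -y k) hnyB n m
      simpa only [ρ, min_eq_left h] using this
  have hMC : MackeyCauchy (fun N => ∑ k ∈ Finset.range N, p k x) :=
    ⟨B, ρ, hBbdd, hρ0, htend, hmem⟩
  exact ⟨hMC, hF _ hMC⟩
end

section
/- Let A be a locally convex topological algebra over ℂ satisfying: for each continuous seminorm p there exist a continuous seminorm q and M ≥ 0 with ‖μ_n‖_{p,q} ≤ M^n for all n. Then for continuous γ : [0,1] → A for which the Picard iterates σ_n(γ) are defined, the series ∑_{n≥1} ‖σ_n(γ)‖_{C^1,p} ≤ M‖γ‖_{C^0,q}·e^{M‖γ‖_{C^0,q}} converges; in particular the Picard series ∑_{n≥0} σ_n(γ) converges absolutely in the completion of C¹([0,1],A). -/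
/-!
STATEMENT 16: under the bound `‖μ_n‖_{p,q} ≤ M^n`, the series of `C¹`-seminorms of
the Picard terms `σ_n(γ)` converges, with
`∑_{n≥1} ‖σ_n(γ)‖_{C¹,p} ≤ M ‖γ‖_{C⁰,q} e^{M ‖γ‖_{C⁰,q}}`; in particular the Picard
series converges absolutely in the completion of `C¹([0,1],A)`.
(`‖σ_n‖_{C¹,p} = max (sup_t p (σ_n t)) (sup_t p (σ_n' t))` with
`σ_n'(t) = σ_{n-1}(t) γ(t)`.)
-/

open Filter Set MeasureTheory

def IsWeakIntegral {A : Type*} [Ring A] [Algebra ℂ A] [TopologicalSpace A]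
    (f : ℝ → A) (a b : ℝ) (v : A) : Prop :=
  ∀ lam : A →L[ℂ] ℂ, (∫ s in a..b, lam (f s)) = lam v

section Aux
variable {A : Type*} [Ring A] [Algebra ℂ A] [TopologicalSpace A] [IsTopologicalRing A]
  [ContinuousSMul ℂ A]

lemma aux_dual (p : Seminorm ℂ A) (hp : Continuous p) (v : A) :
    ∃ lam : A →L[ℂ] ℂ, lam v = (p v : ℂ) ∧ ∀ x, ‖lam x‖ ≤ p x := by
  by_cases hv : v = 0
  · exact ⟨0, by simp [hv], fun x => by simp [apply_nonneg]⟩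
  have H : ∀ c : ℝ, c • v = 0 → c • (p v) = 0 := by
    intro c hc
    rcases eq_or_ne c 0 with h | h
    · simp [h]
    · exact absurd (by rw [← inv_smul_smul₀ h v, hc, smul_zero]) hv
  set f := LinearPMap.mkSpanSingleton' (σ := RingHom.id ℝ) v (p v) H with hf
  have hsmul : ∀ (c : ℝ) (x : A), p (c • x) = |c| * p x := by
    intro c x
    rw [← Complex.coe_smul, map_smul_eq_mul, Complex.norm_real, Real.norm_eq_abs]
  obtain ⟨g, hg1, hg2⟩ := exists_extension_of_le_sublinear f p
    (fun c hc x => by rw [hsmul, abs_of_pos hc])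
    (fun x y => map_add_le_add p x y)
    (by
      rintro ⟨x, hx⟩
      rcases Submodule.mem_span_singleton.1 hx with ⟨c, rfl⟩
      calc f ⟨c • v, hx⟩ = c • (p v) := LinearPMap.mkSpanSingleton'_apply v (p v) H c hx
        _ ≤ |c| * p v := by
            rw [smul_eq_mul]
            exact mul_le_mul_of_nonneg_right (le_abs_self c) (apply_nonneg p v)
        _ = p (c • v) := (hsmul c v).symm)
  have hgv : g v = p v := by
    have := hg1 ⟨v, Submodule.mem_span_singleton_self v⟩
    exact this.trans (LinearPMap.mkSpanSingleton'_apply_self _ _ _ _)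
  set lam0 := g.extendTo𝕜' (𝕜 := ℂ) with hlam0
  have hbound : ∀ x, ‖lam0 x‖ ≤ p x := by
    intro x
    have hsq : ‖lam0 x‖ ^ 2 = g ((starRingEnd ℂ) (lam0 x) • x) :=
      g.norm_extendTo𝕜'_apply_sq (𝕜 := ℂ) x
    have h1 : g ((starRingEnd ℂ) (lam0 x) • x) ≤ ‖(starRingEnd ℂ) (lam0 x)‖ * p x := by
      calc g ((starRingEnd ℂ) (lam0 x) • x) ≤ p ((starRingEnd ℂ) (lam0 x) • x) := hg2 _
        _ = ‖(starRingEnd ℂ) (lam0 x)‖ * p x := map_smul_eq_mul p _ x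
    rw [RCLike.norm_conj] at h1
    nlinarith [norm_nonneg (lam0 x), apply_nonneg p x, hsq]
  have hre : RCLike.re (lam0 v) = g v := g.extendTo𝕜'_apply_re (𝕜 := ℂ) v
  have him : (lam0 v).im = 0 := by
    have h1 : ‖lam0 v‖ ≤ p v := hbound v
    have h2 : (lam0 v).re = p v := by rw [← hgv]; exact hre
    have h3 : ‖lam0 v‖ ^ 2 ≤ (p v) ^ 2 :=
      pow_le_pow_left₀ (norm_nonneg _) h1 2
    have h4 : ‖lam0 v‖ ^ 2 = (lam0 v).re ^ 2 + (lam0 v).im ^ 2 := by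
      rw [Complex.sq_norm, Complex.normSq_apply]; ring
    have h2' : (lam0 v).re ^ 2 = p v ^ 2 := by rw [h2]
    have h5 : (lam0 v).im ^ 2 ≤ 0 := by linarith
    have h6 := le_antisymm h5 (sq_nonneg _)
    exact pow_eq_zero_iff (n := 2) (by norm_num) |>.1 h6
  have hveq : lam0 v = (p v : ℂ) := by
    apply Complex.ext
    · rw [← hgv]; exact hre
    · simp [him]
  have hcont : Continuous lam0 := by
    apply continuous_of_continuousAt_zero lam0.toAddMonoidHom
    have : Tendsto lam0 (nhds 0) (nhds 0) := by
      apply squeeze_zero_norm hbound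
      have := hp.tendsto 0
      rwa [map_zero] at this
    simpa [ContinuousAt]
  exact ⟨⟨lam0, hcont⟩, hveq, hbound⟩

lemma aux_wib (p : Seminorm ℂ A) (hp : Continuous p) (f : ℝ → A) (t : ℝ) (ht : 0 ≤ t)
    (hf : ContinuousOn f (Icc 0 t)) (v : A) (hv : IsWeakIntegral f 0 t v) :
    p v ≤ ∫ s in (0:ℝ)..t, p (f s) := by
  obtain ⟨lam, h1, h2⟩ := aux_dual p hp v
  have huIcc : uIcc (0:ℝ) t = Icc 0 t := uIcc_of_le ht
  have hfc : ContinuousOn (fun s => lam (f s)) (uIcc (0:ℝ) t) := by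
    rw [huIcc]; exact lam.continuous.comp_continuousOn hf
  have hi1 : IntervalIntegrable (fun s => ‖lam (f s)‖) volume 0 t :=
    hfc.norm.intervalIntegrable
  have hi2 : IntervalIntegrable (fun s => p (f s)) volume 0 t := by
    apply ContinuousOn.intervalIntegrable
    rw [huIcc]; exact hp.comp_continuousOn hf
  calc p v = ‖(p v : ℂ)‖ := by
        rw [Complex.norm_real, Real.norm_eq_abs, abs_of_nonneg (apply_nonneg p v)]
    _ = ‖lam v‖ := by rw [h1]
    _ = ‖∫ s in (0:ℝ)..t, lam (f s)‖ := by rw [hv lam]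
    _ ≤ ∫ s in (0:ℝ)..t, ‖lam (f s)‖ :=
        intervalIntegral.norm_integral_le_integral_norm ht
    _ ≤ ∫ s in (0:ℝ)..t, p (f s) := by
        apply intervalIntegral.integral_mono_on ht hi1 hi2
        intro s _; exact h2 (f s)

lemma aux_smul_prod : ∀ (k : ℕ) (c : Fin k → ℂ) (y : Fin k → A),
    (List.ofFn (fun i => c i • y i)).prod = (∏ i, c i) • (List.ofFn y).prod := by
  intro k
  induction k with
  | zero => intro c y; simp
  | succ n ih =>
    intro c y
    rw [List.ofFn_succ, List.ofFn_succ, List.prod_cons, List.prod_cons, Fin.prod_univ_succ]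
    rw [ih (fun i => c i.succ) (fun i => y i.succ), smul_mul_smul_comm]

lemma aux_prod (p q : Seminorm ℂ A) (M : ℝ)
    (hmu : ∀ (n : ℕ) (x : Fin n → A), (∀ i, q (x i) ≤ 1) → p (List.ofFn x).prod ≤ M ^ n)
    (k : ℕ) (y : Fin k → A) : p (List.ofFn y).prod ≤ M ^ k * ∏ i, q (y i) := by
  have key : ∀ ε > (0:ℝ), p (List.ofFn y).prod ≤ M ^ k * ∏ i, (q (y i) + ε) := by
    intro ε hε
    set c : Fin k → ℂ := fun i => ((q (y i) + ε : ℝ) : ℂ) with hc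
    have hpos : ∀ i, (0:ℝ) < q (y i) + ε := fun i => by positivity
    have h1 : ∀ i, q ((c i)⁻¹ • y i) ≤ 1 := by
      intro i
      rw [map_smul_eq_mul, norm_inv, hc, Complex.norm_real, Real.norm_eq_abs,
        abs_of_pos (hpos i)]
      rw [inv_mul_le_iff₀ (hpos i), mul_one]
      linarith [hε]
    have h2 := hmu k _ h1
    rw [aux_smul_prod k (fun i => (c i)⁻¹) y, map_smul_eq_mul] at h2
    have hnorm : ‖∏ i, (c i)⁻¹‖ = (∏ i, (q (y i) + ε))⁻¹ := by
      rw [norm_prod, ← Finset.prod_inv_distrib]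
      congr 1
      ext i
      rw [norm_inv, hc, Complex.norm_real, Real.norm_eq_abs, abs_of_pos (hpos i)]
    rw [hnorm] at h2
    set D := ∏ i, (q (y i) + ε) with hD
    have hDpos : 0 < D := Finset.prod_pos (fun i _ => hpos i)
    have := mul_le_mul_of_nonneg_left h2 hDpos.le
    rw [← mul_assoc, mul_inv_cancel₀ hDpos.ne', one_mul] at this
    linarith [this]
  have hlim : Tendsto (fun ε : ℝ => M ^ k * ∏ i, (q (y i) + ε)) (nhdsWithin 0 (Ioi 0))
      (nhds (M ^ k * ∏ i, q (y i))) := by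
    have hcont : Continuous (fun ε : ℝ => M ^ k * ∏ i, (q (y i) + ε)) := by
      apply continuous_const.mul
      exact continuous_finset_prod _ (fun i _ => continuous_const.add continuous_id)
    have := hcont.tendsto 0
    simp only [add_zero] at this
    exact this.mono_left nhdsWithin_le_nhds
  refine ge_of_tendsto hlim ?_
  filter_upwards [self_mem_nhdsWithin] with ε hε using key ε hε

end Aux

theorem stmt16 {A : Type*} [Ring A] [Algebra ℂ A]
    [TopologicalSpace A] [IsTopologicalRing A] [ContinuousSMul ℂ A]
    [LocallyConvexSpace ℝ A]
    (p q : Seminorm ℂ A) (hp : Continuous p) (hq : Continuous q)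
    (M : ℝ) (hM : 0 ≤ M)
    (hmu : ∀ (n : ℕ) (x : Fin n → A), (∀ i, q (x i) ≤ 1) →
      p (List.ofFn x).prod ≤ M ^ n)
    (γ : ℝ → A) (hγ : ContinuousOn γ (Icc 0 1))
    (σ : ℕ → ℝ → A) (hσ0 : σ 0 = fun _ => (1 : A))
    (hσcont : ∀ n, ContinuousOn (σ n) (Icc 0 1))
    (hrec : ∀ n, ∀ t ∈ Icc (0 : ℝ) 1,
      IsWeakIntegral (fun s => σ n s * γ s) 0 t (σ (n + 1) t)) :
    -- `c1 n = ‖σ_{n+1}(γ)‖_{C¹,p}`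
    Summable (fun n : ℕ => max (⨆ t : Icc (0 : ℝ) 1, p (σ (n + 1) t))
        (⨆ t : Icc (0 : ℝ) 1, p (σ n t * γ t))) ∧
      (∑' n : ℕ, max (⨆ t : Icc (0 : ℝ) 1, p (σ (n + 1) t))
          (⨆ t : Icc (0 : ℝ) 1, p (σ n t * γ t))) ≤
        M * (⨆ s : Icc (0 : ℝ) 1, q (γ s)) *
          Real.exp (M * (⨆ s : Icc (0 : ℝ) 1, q (γ s))) := by
  haveI : Nonempty (Icc (0:ℝ) 1) := ⟨⟨0, left_mem_Icc.2 zero_le_one⟩⟩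
  set Q : ℝ := ⨆ s : Icc (0 : ℝ) 1, q (γ s) with hQdef
  have hbdd : BddAbove (range fun s : Icc (0:ℝ) 1 => q (γ (s : ℝ))) :=
    (isCompact_range (hq.comp hγ.restrict)).bddAbove
  have hQle : ∀ s ∈ Icc (0:ℝ) 1, q (γ s) ≤ Q := fun s hs =>
    le_ciSup hbdd (⟨s, hs⟩ : Icc (0:ℝ) 1)
  have hQ0 : 0 ≤ Q := Real.iSup_nonneg fun s => apply_nonneg q _
  -- the key estimate
  have key : ∀ n, ∀ t ∈ Icc (0:ℝ) 1, ∀ (k : ℕ) (y : Fin k → A),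
      p (σ n t * (List.ofFn y).prod) ≤
        M ^ (n + k) * (∏ i, q (y i)) * (Q ^ n * t ^ n / (n.factorial : ℝ)) := by
    intro n
    induction n with
    | zero =>
      intro t ht k y
      rw [hσ0]
      simpa using aux_prod p q M hmu k y
    | succ n ih =>
      intro t ht k y
      set w := (List.ofFn y).prod with hw
      set P := ∏ i, q (y i) with hP
      have hPnn : 0 ≤ P := Finset.prod_nonneg fun i _ => apply_nonneg q _
      -- weak integral for the multiplied function
      have hwint : IsWeakIntegral (fun s => σ n s * γ s * w) 0 t (σ (n+1) t * w) := by
        intro lam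
        let lam' : A →L[ℂ] ℂ :=
          { toFun := fun x => lam (x * w)
            map_add' := fun a b => by
              show lam ((a + b) * w) = lam (a * w) + lam (b * w)
              rw [add_mul, map_add]
            map_smul' := fun c a => by
              show lam ((c • a) * w) = c • lam (a * w)
              rw [smul_mul_assoc, _root_.map_smul]
            cont := lam.continuous.comp (continuous_mul_right _) }
        exact hrec n t ht lam'
      have hcf : ContinuousOn (fun s => σ n s * γ s * w) (Icc 0 t) :=
        (((hσcont n).mul hγ).mul continuousOn_const).mono (Icc_subset_Icc le_rfl ht.2)
      have hb := aux_wib p hp _ t ht.1 hcf _ hwint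
      set K : ℝ := M ^ (n + (k+1)) * (Q * P) * Q ^ n / (n.factorial : ℝ) with hK
      have hKnn : 0 ≤ K := by
        apply div_nonneg _ (Nat.cast_nonneg _)
        exact mul_nonneg (mul_nonneg (pow_nonneg hM _) (mul_nonneg hQ0 hPnn)) (pow_nonneg hQ0 _)
      have hmono : ∀ s ∈ Icc (0:ℝ) t, p (σ n s * γ s * w) ≤ K * s ^ n := by
        intro s hs
        have hs1 : s ∈ Icc (0:ℝ) 1 := ⟨hs.1, hs.2.trans ht.2⟩
        have hih := ih s hs1 (k+1) (Fin.cons (γ s) y)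
        rw [List.ofFn_succ] at hih
        simp only [Fin.cons_zero, Fin.cons_succ, List.prod_cons] at hih
        rw [Fin.prod_univ_succ] at hih
        simp only [Fin.cons_zero, Fin.cons_succ] at hih
        rw [← mul_assoc] at hih
        have hfac : (0:ℝ) ≤ Q ^ n * s ^ n / (n.factorial : ℝ) :=
          div_nonneg (mul_nonneg (pow_nonneg hQ0 _) (pow_nonneg hs.1 _)) (Nat.cast_nonneg _)
        calc p (σ n s * γ s * w)
            ≤ M ^ (n + (k+1)) * (q (γ s) * P) * (Q ^ n * s ^ n / (n.factorial : ℝ)) := hih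
          _ ≤ M ^ (n + (k+1)) * (Q * P) * (Q ^ n * s ^ n / (n.factorial : ℝ)) := by
              apply mul_le_mul_of_nonneg_right _ hfac
              exact mul_le_mul_of_nonneg_left
                (mul_le_mul_of_nonneg_right (hQle s hs1) hPnn) (pow_nonneg hM _)
          _ = K * s ^ n := by rw [hK]; ring
      have hiK : IntervalIntegrable (fun s => K * s ^ n) volume 0 t :=
        (continuous_const.mul (continuous_pow n)).intervalIntegrable 0 t
      have hif : IntervalIntegrable (fun s => p (σ n s * γ s * w)) volume 0 t := by
        apply ContinuousOn.intervalIntegrable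
        rw [uIcc_of_le ht.1]
        exact hp.comp_continuousOn hcf
      have hint : (∫ s in (0:ℝ)..t, p (σ n s * γ s * w)) ≤ K * (t ^ (n+1) / (n+1)) := by
        calc (∫ s in (0:ℝ)..t, p (σ n s * γ s * w))
            ≤ ∫ s in (0:ℝ)..t, K * s ^ n :=
              intervalIntegral.integral_mono_on ht.1 hif hiK hmono
          _ = K * (t ^ (n+1) / (n+1)) := by
              rw [intervalIntegral.integral_const_mul, integral_pow]
              norm_num
      have hfacne : ((n.factorial : ℝ)) ≠ 0 := Nat.cast_ne_zero.2 n.factorial_ne_zero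
      have hn1 : ((n : ℝ) + 1) ≠ 0 := by positivity
      have heq : K * (t ^ (n+1) / ((n:ℝ)+1)) =
          M ^ (n + 1 + k) * P * (Q ^ (n+1) * t ^ (n+1) / (((n+1).factorial : ℝ))) := by
        rw [hK, Nat.factorial_succ]
        push_cast
        field_simp
        ring
      exact hb.trans (hint.trans heq.le)
  set C := M * Q with hC
  have hC0 : 0 ≤ C := mul_nonneg hM hQ0
  have hA1 : ∀ n : ℕ, (⨆ t : Icc (0:ℝ) 1, p (σ (n+1) t)) ≤
      C ^ (n+1) / (((n+1).factorial : ℝ)) := by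
    intro n
    apply ciSup_le
    intro t
    have hkey := key (n+1) t t.2 0 Fin.elim0
    simp only [List.ofFn_zero, List.prod_nil, mul_one, Finset.univ_eq_empty,
      Finset.prod_empty, add_zero] at hkey
    refine hkey.trans ?_
    have ht1 : (t:ℝ) ^ (n+1) ≤ 1 := pow_le_one₀ t.2.1 t.2.2
    have hnn : 0 ≤ M ^ (n+1) * Q ^ (n+1) / (((n+1).factorial : ℝ)) :=
      div_nonneg (mul_nonneg (pow_nonneg hM _) (pow_nonneg hQ0 _)) (Nat.cast_nonneg _)
    calc M ^ (n+1) * (Q ^ (n+1) * (t:ℝ) ^ (n+1) / (((n+1).factorial : ℝ)))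
        = (M ^ (n+1) * Q ^ (n+1) / (((n+1).factorial : ℝ))) * (t:ℝ) ^ (n+1) := by ring
      _ ≤ (M ^ (n+1) * Q ^ (n+1) / (((n+1).factorial : ℝ))) * 1 :=
          mul_le_mul_of_nonneg_left ht1 hnn
      _ = C ^ (n+1) / (((n+1).factorial : ℝ)) := by rw [hC, mul_pow]; ring
  have hA2 : ∀ n : ℕ, (⨆ t : Icc (0:ℝ) 1, p (σ n t * γ t)) ≤
      C ^ (n+1) / ((n.factorial : ℝ)) := by
    intro n
    apply ciSup_le
    intro t
    have hkey := key n t t.2 1 (fun _ : Fin 1 => γ t)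
    simp only [List.ofFn_succ, List.ofFn_zero, List.prod_cons, List.prod_nil, mul_one,
      Fin.prod_univ_one] at hkey
    refine hkey.trans ?_
    have ht1 : (t:ℝ) ^ n ≤ 1 := pow_le_one₀ t.2.1 t.2.2
    have hqt := hQle t t.2
    have hFpos : (0:ℝ) < (n.factorial : ℝ) := by
      exact_mod_cast n.factorial_pos
    have hc : Q ^ n * (t:ℝ) ^ n / (n.factorial : ℝ) ≤ Q ^ n * 1 / (n.factorial : ℝ) :=
      (div_le_div_iff_of_pos_right hFpos).2 (mul_le_mul_of_nonneg_left ht1 (pow_nonneg hQ0 n))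
    calc M ^ (n+1) * q (γ t) * (Q ^ n * (t:ℝ) ^ n / (n.factorial : ℝ))
        ≤ M ^ (n+1) * Q * (Q ^ n * 1 / (n.factorial : ℝ)) := by
          apply mul_le_mul (mul_le_mul_of_nonneg_left hqt (pow_nonneg hM _)) hc
          · exact div_nonneg (mul_nonneg (pow_nonneg hQ0 _) (pow_nonneg t.2.1 _)) hFpos.le
          · exact mul_nonneg (pow_nonneg hM _) hQ0
      _ = C ^ (n+1) / ((n.factorial : ℝ)) := by rw [hC, mul_pow]; ring
  have hbeq : (fun n : ℕ => C ^ (n+1) / (n.factorial : ℝ)) =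
      fun n => C * (C ^ n / (n.factorial : ℝ)) := by
    funext n
    rw [pow_succ]
    ring
  have hbsum : Summable (fun n : ℕ => C ^ (n+1) / (n.factorial : ℝ)) := by
    rw [hbeq]
    exact (Real.summable_pow_div_factorial C).mul_left C
  have hle : ∀ n : ℕ, max (⨆ t : Icc (0:ℝ) 1, p (σ (n+1) t))
      (⨆ t : Icc (0:ℝ) 1, p (σ n t * γ t)) ≤ C ^ (n+1) / (n.factorial : ℝ) := by
    intro n
    apply max_le _ (hA2 n)
    refine (hA1 n).trans ?_
    apply div_le_div_of_nonneg_left (pow_nonneg hC0 _)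
    · exact_mod_cast n.factorial_pos
    · exact_mod_cast Nat.factorial_le (Nat.le_succ n)
  have h0 : ∀ n : ℕ, 0 ≤ max (⨆ t : Icc (0:ℝ) 1, p (σ (n+1) t))
      (⨆ t : Icc (0:ℝ) 1, p (σ n t * γ t)) := by
    intro n
    exact le_trans (Real.iSup_nonneg fun t => apply_nonneg p _) (le_max_left _ _)
  have hsum : Summable (fun n : ℕ => max (⨆ t : Icc (0:ℝ) 1, p (σ (n+1) t))
      (⨆ t : Icc (0:ℝ) 1, p (σ n t * γ t))) :=
    Summable.of_nonneg_of_le h0 hle hbsum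
  refine ⟨hsum, ?_⟩
  have hexp : Real.exp C = ∑' n : ℕ, C ^ n / (n.factorial : ℝ) := by
    rw [Real.exp_eq_exp_ℝ, NormedSpace.exp_eq_tsum_div]
  calc (∑' n : ℕ, max (⨆ t : Icc (0:ℝ) 1, p (σ (n+1) t))
      (⨆ t : Icc (0:ℝ) 1, p (σ n t * γ t))) ≤ ∑' n : ℕ, C ^ (n+1) / (n.factorial : ℝ) :=
        Summable.tsum_le_tsum hle hsum hbsum
    _ = C * ∑' n : ℕ, C ^ n / (n.factorial : ℝ) := by rw [hbeq, tsum_mul_left]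
    _ = C * Real.exp C := by rw [hexp]
end

section
/- Let A be a real locally convex algebra, p a continuous seminorm on A, and p_ℂ the seminorm on the complexification A_ℂ defined by p_ℂ(a+ib) := inf{∑_j |z_j| p(x_j) : a+ib = ∑_j z_j x_j, x_j ∈ A, z_j ∈ ℂ}. Then max{p(a), p(b)} ≤ p_ℂ(a+ib) ≤ p(a) + p(b) for all a, b ∈ A, and for the complexified multiplication maps, ‖(μ_n)_ℂ‖_{p_ℂ,q_ℂ} = ‖μ_n‖_{p,q}. In particular, if A satisfies condition (*), so does A_ℂ. -/
/-!
STATEMENT 19: for a real locally convex algebra `A` with complexification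
`A_ℂ = ℂ ⊗[ℝ] A` and a continuous seminorm `p`, the complexified seminorm
`p_ℂ(w) = inf {∑_j |z_j| p(x_j) : w = ∑_j z_j ⊗ x_j}` satisfies
`max (p a) (p b) ≤ p_ℂ(a + ib) ≤ p a + p b`, and for the complexified
multiplication maps `‖(μ_n)_ℂ‖_{p_ℂ,q_ℂ} = ‖μ_n‖_{p,q}`.  In particular condition
(*) passes from `A` to `A_ℂ`.
-/

open scoped TensorProduct ENNReal

/-- `‖μ_n‖_{P,Q}` for arbitrary (seminorm-like) functions `P, Q` on a ring. -/
noncomputable def muNormF {R : Type*} [Ring R] (P Q : R → ℝ) (n : ℕ) : ℝ≥0∞ :=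
  ⨆ x : {x : Fin n → R // ∀ i, Q (x i) ≤ 1}, ENNReal.ofReal (P (List.ofFn x.1).prod)

/-- The complexification `p_ℂ` of a seminorm `p` on `A`, on `A_ℂ = ℂ ⊗[ℝ] A`. -/
noncomputable def seminormC {A : Type*} [Ring A] [Algebra ℝ A]
    (p : Seminorm ℝ A) (w : ℂ ⊗[ℝ] A) : ℝ :=
  sInf {c | ∃ (m : ℕ) (z : Fin m → ℂ) (x : Fin m → A),
    w = ∑ j, z j ⊗ₜ[ℝ] x j ∧ c = ∑ j, ‖z j‖ * p (x j)}

namespace Stmt19Aux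

variable {A : Type*} [Ring A] [Algebra ℝ A]

/-- The set over which the infimum defining `seminormC` is taken. -/
def repSet (p : Seminorm ℝ A) (w : ℂ ⊗[ℝ] A) : Set ℝ :=
  {c | ∃ (m : ℕ) (z : Fin m → ℂ) (x : Fin m → A),
    w = ∑ j, z j ⊗ₜ[ℝ] x j ∧ c = ∑ j, ‖z j‖ * p (x j)}

lemma seminormC_eq (p : Seminorm ℝ A) (w : ℂ ⊗[ℝ] A) :
    seminormC p w = sInf (repSet p w) := rfl

lemma rep_exists (w : ℂ ⊗[ℝ] A) :
    ∃ (m : ℕ) (z : Fin m → ℂ) (x : Fin m → A), w = ∑ j, z j ⊗ₜ[ℝ] x j := by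
  induction w using TensorProduct.induction_on with
  | zero => exact ⟨0, ![], ![], by simp⟩
  | tmul z x => exact ⟨1, ![z], ![x], by simp⟩
  | add u v hu hv =>
    obtain ⟨m, z, x, rfl⟩ := hu
    obtain ⟨m', z', x', rfl⟩ := hv
    refine ⟨m + m', Fin.append z z', Fin.append x x', ?_⟩
    rw [Fin.sum_univ_add]
    simp [Fin.append_left, Fin.append_right]

lemma repSet_nonempty (p : Seminorm ℝ A) (w : ℂ ⊗[ℝ] A) : (repSet p w).Nonempty := by
  obtain ⟨m, z, x, h⟩ := rep_exists w
  exact ⟨_, m, z, x, h, rfl⟩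

lemma repSet_bddBelow (p : Seminorm ℝ A) (w : ℂ ⊗[ℝ] A) : BddBelow (repSet p w) := by
  refine ⟨0, ?_⟩
  rintro c ⟨m, z, x, -, rfl⟩
  exact Finset.sum_nonneg fun j _ => mul_nonneg (norm_nonneg _) (apply_nonneg p _)

lemma seminormC_le_sum {ι : Type*} [Fintype ι] (p : Seminorm ℝ A)
    (z : ι → ℂ) (x : ι → A) :
    seminormC p (∑ j, z j ⊗ₜ[ℝ] x j) ≤ ∑ j, ‖z j‖ * p (x j) := by
  set e := (Fintype.equivFin ι).symm
  refine csInf_le (repSet_bddBelow p _) ⟨Fintype.card ι, z ∘ e, x ∘ e, ?_, ?_⟩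
  · exact (e.sum_comp fun j => z j ⊗ₜ[ℝ] x j).symm
  · exact (e.sum_comp fun j => ‖z j‖ * p (x j)).symm

lemma seminormC_tmul_le (p : Seminorm ℝ A) (z : ℂ) (x : A) :
    seminormC p (z ⊗ₜ[ℝ] x) ≤ ‖z‖ * p x := by
  simpa using seminormC_le_sum p (fun _ : Fin 1 => z) (fun _ : Fin 1 => x)

lemma seminorm_sum_le {ι : Type*} (p : Seminorm ℝ A) (s : Finset ι) (f : ι → A) :
    p (∑ i ∈ s, f i) ≤ ∑ i ∈ s, p (f i) := by
  classical
  induction s using Finset.cons_induction with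
  | empty => simp
  | cons a s ha ih =>
    rw [Finset.sum_cons, Finset.sum_cons]
    exact (map_add_le_add p _ _).trans (by linarith)

lemma apply_le_seminormC (p : Seminorm ℝ A) (f : ℂ →ₗ[ℝ] ℝ)
    (hf : ∀ z, |f z| ≤ ‖z‖) (w : ℂ ⊗[ℝ] A) :
    p (((TensorProduct.lid ℝ A).toLinearMap ∘ₗ LinearMap.rTensor A f) w) ≤ seminormC p w := by
  rw [seminormC_eq]
  refine le_csInf (repSet_nonempty p w) ?_
  rintro c ⟨m, z, x, rfl, rfl⟩
  rw [map_sum]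
  refine (seminorm_sum_le p _ _).trans (Finset.sum_le_sum fun j _ => ?_)
  rw [LinearMap.comp_apply, LinearMap.rTensor_tmul, LinearEquiv.coe_coe,
    TensorProduct.lid_tmul, map_smul_eq_mul]
  exact mul_le_mul_of_nonneg_right (hf _) (apply_nonneg p _)

lemma p_le_seminormC_re (p : Seminorm ℝ A) (a b : A) :
    p a ≤ seminormC p ((1 : ℂ) ⊗ₜ[ℝ] a + Complex.I ⊗ₜ[ℝ] b) := by
  have := apply_le_seminormC p Complex.reLm (fun z => Complex.abs_re_le_norm z)
    ((1 : ℂ) ⊗ₜ[ℝ] a + Complex.I ⊗ₜ[ℝ] b)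
  simpa [Complex.I_re] using this

lemma p_le_seminormC_im (p : Seminorm ℝ A) (a b : A) :
    p b ≤ seminormC p ((1 : ℂ) ⊗ₜ[ℝ] a + Complex.I ⊗ₜ[ℝ] b) := by
  have := apply_le_seminormC p Complex.imLm (fun z => Complex.abs_im_le_norm z)
    ((1 : ℂ) ⊗ₜ[ℝ] a + Complex.I ⊗ₜ[ℝ] b)
  simpa [Complex.I_im] using this

lemma p_le_seminormC_tmul_one (p : Seminorm ℝ A) (a : A) :
    p a ≤ seminormC p ((1 : ℂ) ⊗ₜ[ℝ] a) := by
  have := p_le_seminormC_re p a 0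
  simpa using this

lemma listProd_smul : ∀ (n : ℕ) (c : Fin n → ℝ) (x : Fin n → A),
    (List.ofFn fun i => c i • x i).prod = (∏ i, c i) • (List.ofFn x).prod := by
  intro n
  induction n with
  | zero => intro c x; simp
  | succ n ih =>
    intro c x
    rw [List.ofFn_succ, List.prod_cons, ih (fun i => c i.succ) (fun i => x i.succ)]
    rw [List.ofFn_succ (f := x), List.prod_cons, Fin.prod_univ_succ]
    rw [smul_mul_smul_comm]

lemma listProd_tmul : ∀ (n : ℕ) (z : Fin n → ℂ) (x : Fin n → A),
    (List.ofFn fun i => z i ⊗ₜ[ℝ] x i).prod = (∏ i, z i) ⊗ₜ[ℝ] (List.ofFn x).prod := by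
  intro n
  induction n with
  | zero => intro z x; simp [Algebra.TensorProduct.one_def]
  | succ n ih =>
    intro z x
    rw [List.ofFn_succ, List.prod_cons, ih (fun i => z i.succ) (fun i => x i.succ)]
    rw [List.ofFn_succ (f := x), List.prod_cons, Fin.prod_univ_succ]
    rw [Algebra.TensorProduct.tmul_mul_tmul]

lemma prod_expand {R : Type*} [Ring R] :
    ∀ (n : ℕ) (κ : Fin n → Type) [∀ i, Fintype (κ i)] (f : ∀ i, κ i → R),
    (List.ofFn fun i => ∑ j, f i j).prod
      = ∑ J : (∀ i, κ i), (List.ofFn fun i => f i (J i)).prod := by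
  intro n
  induction n with
  | zero => intro κ _ f; simp
  | succ n ih =>
    intro κ _ f
    rw [List.ofFn_succ, List.prod_cons,
      ih (fun i => κ i.succ) (fun i j => f i.succ j),
      ← Equiv.sum_comp (Fin.consEquiv κ), Fintype.sum_prod_type, Finset.sum_mul]
    refine Finset.sum_congr rfl fun j _ => ?_
    rw [Finset.mul_sum]
    refine Finset.sum_congr rfl fun J _ => ?_
    rw [List.ofFn_succ]
    simp [Fin.consEquiv, Fin.cons_zero, Fin.cons_succ]

lemma muNormF_nonneg_mem {R : Type*} [Ring R] (P Q : R → ℝ) (n : ℕ)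
    (x : Fin n → R) (hx : ∀ i, Q (x i) ≤ 1) :
    ENNReal.ofReal (P (List.ofFn x).prod) ≤ muNormF P Q n :=
  le_iSup (fun s : {x : Fin n → R // ∀ i, Q (x i) ≤ 1} =>
    ENNReal.ofReal (P (List.ofFn s.1).prod)) ⟨x, hx⟩

lemma key_real (p q : Seminorm ℝ A) (n : ℕ)
    (hM : muNormF (fun x : A => p x) (fun x : A => q x) n ≠ ⊤) (x : Fin n → A) :
    p (List.ofFn x).prod
      ≤ (muNormF (fun x : A => p x) (fun x : A => q x) n).toReal * ∏ i, q (x i) := by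
  set M := (muNormF (fun x : A => p x) (fun x : A => q x) n).toReal with hMdef
  have hM0 : 0 ≤ M := ENNReal.toReal_nonneg
  have step : ∀ δ ∈ Set.Ioi (0 : ℝ), p (List.ofFn x).prod ≤ M * ∏ i, (q (x i) + δ) := by
    intro δ hδ
    have hδ' : (0:ℝ) < δ := hδ
    have hc : ∀ i, 0 < q (x i) + δ := fun i =>
      add_pos_of_nonneg_of_pos (apply_nonneg q _) hδ'
    set y : Fin n → A := fun i => (q (x i) + δ)⁻¹ • x i with hy
    have hqy : ∀ i, q (y i) ≤ 1 := by
      intro i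
      rw [hy]
      rw [map_smul_eq_mul, Real.norm_eq_abs, abs_of_nonneg (inv_nonneg.2 (hc i).le)]
      rw [inv_mul_le_iff₀ (hc i), mul_one]
      linarith [hδ'.le, apply_nonneg q (x i)]
    have h1 : ENNReal.ofReal (p (List.ofFn y).prod)
        ≤ muNormF (fun x : A => p x) (fun x : A => q x) n :=
      muNormF_nonneg_mem _ _ n y hqy
    have h2 : p (List.ofFn y).prod ≤ M := by
      have := ENNReal.toReal_mono hM h1
      rwa [ENNReal.toReal_ofReal (apply_nonneg p _)] at this
    have hprodpos : (0:ℝ) < ∏ i, (q (x i) + δ) := Finset.prod_pos fun i _ => hc i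
    have h3 : (List.ofFn x).prod = (∏ i, (q (x i) + δ)) • (List.ofFn y).prod := by
      rw [hy, listProd_smul, smul_smul, Finset.prod_inv_distrib,
        mul_inv_cancel₀ hprodpos.ne', one_smul]
    rw [h3, map_smul_eq_mul, Real.norm_eq_abs, abs_of_pos hprodpos, mul_comm]
    exact mul_le_mul_of_nonneg_right h2 hprodpos.le
  have tends : Filter.Tendsto (fun δ : ℝ => M * ∏ i, (q (x i) + δ))
      (nhdsWithin 0 (Set.Ioi 0)) (nhds (M * ∏ i, q (x i))) := by
    have hcont : Continuous fun δ : ℝ => M * ∏ i, (q (x i) + δ) := by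
      exact continuous_const.mul (continuous_finset_prod _ fun i _ =>
        continuous_const.add continuous_id)
    have := (hcont.tendsto 0).mono_left (nhdsWithin_le_nhds (s := Set.Ioi (0:ℝ)))
    simpa using this
  exact ge_of_tendsto tends (eventually_nhdsWithin_of_forall step)

lemma key_c (p q : Seminorm ℝ A) (n : ℕ)
    (hM : muNormF (fun x : A => p x) (fun x : A => q x) n ≠ ⊤)
    (w : Fin n → ℂ ⊗[ℝ] A) (hw : ∀ i, seminormC q (w i) ≤ 1) :
    seminormC p (List.ofFn w).prod
      ≤ (muNormF (fun x : A => p x) (fun x : A => q x) n).toReal := by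
  set M := (muNormF (fun x : A => p x) (fun x : A => q x) n).toReal with hMdef
  have hM0 : 0 ≤ M := ENNReal.toReal_nonneg
  have step : ∀ ε ∈ Set.Ioi (0:ℝ), seminormC p (List.ofFn w).prod ≤ M * (1 + ε) ^ n := by
    intro ε hε
    have hε' : (0:ℝ) < ε := hε
    have H : ∀ i, ∃ (m : ℕ) (z : Fin m → ℂ) (x : Fin m → A),
        w i = ∑ j, z j ⊗ₜ[ℝ] x j ∧ ∑ j, ‖z j‖ * q (x j) < 1 + ε := by
      intro i
      have hlt : sInf (repSet q (w i)) < 1 + ε := by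
        rw [← seminormC_eq]; linarith [hw i]
      obtain ⟨c, ⟨m, z, x, h1, h2⟩, hc⟩ := exists_lt_of_csInf_lt (repSet_nonempty q (w i)) hlt
      exact ⟨m, z, x, h1, h2 ▸ hc⟩
    choose m z x hrep hcost using H
    have hprod : (List.ofFn w).prod = ∑ J : (∀ i, Fin (m i)),
        (∏ i, z i (J i)) ⊗ₜ[ℝ] (List.ofFn fun i => x i (J i)).prod := by
      have hw' : w = fun i => ∑ j, z i j ⊗ₜ[ℝ] x i j := funext hrep
      rw [hw', prod_expand n (fun i => Fin (m i)) (fun i j => z i j ⊗ₜ[ℝ] x i j)]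
      exact Finset.sum_congr rfl fun J _ => listProd_tmul n _ _
    rw [hprod]
    refine (seminormC_le_sum p _ _).trans ?_
    have hbound : ∀ J : (∀ i, Fin (m i)),
        ‖∏ i, z i (J i)‖ * p (List.ofFn fun i => x i (J i)).prod
          ≤ M * ∏ i, (‖z i (J i)‖ * q (x i (J i))) := by
      intro J
      rw [norm_prod]
      calc (∏ i, ‖z i (J i)‖) * p (List.ofFn fun i => x i (J i)).prod
          ≤ (∏ i, ‖z i (J i)‖) * (M * ∏ i, q (x i (J i))) :=
            mul_le_mul_of_nonneg_left (key_real p q n hM _)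
              (Finset.prod_nonneg fun i _ => norm_nonneg _)
        _ = M * ∏ i, (‖z i (J i)‖ * q (x i (J i))) := by
            rw [Finset.prod_mul_distrib]; ring
    refine (Finset.sum_le_sum fun J _ => hbound J).trans ?_
    rw [← Finset.mul_sum]
    refine mul_le_mul_of_nonneg_left ?_ hM0
    have hexp : ∑ J : (∀ i, Fin (m i)), ∏ i, (‖z i (J i)‖ * q (x i (J i)))
        = ∏ i, ∑ j, ‖z i j‖ * q (x i j) := by
      have := prod_expand (R := ℝ) n (fun i => Fin (m i))
        (fun i j => ‖z i j‖ * q (x i j))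
      simp only [List.prod_ofFn] at this
      exact this.symm
    rw [hexp]
    calc ∏ i, ∑ j, ‖z i j‖ * q (x i j) ≤ ∏ _i : Fin n, (1 + ε) := by
          refine Finset.prod_le_prod (fun i _ => ?_) (fun i _ => (hcost i).le)
          exact Finset.sum_nonneg fun j _ =>
            mul_nonneg (norm_nonneg _) (apply_nonneg q _)
      _ = (1 + ε) ^ n := by rw [Finset.prod_const, Finset.card_univ, Fintype.card_fin]
  have tends : Filter.Tendsto (fun ε : ℝ => M * (1 + ε) ^ n)
      (nhdsWithin 0 (Set.Ioi 0)) (nhds M) := by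
    have hcont : Continuous fun ε : ℝ => M * (1 + ε) ^ n := by
      exact continuous_const.mul ((continuous_const.add continuous_id).pow n)
    have := (hcont.tendsto 0).mono_left (nhdsWithin_le_nhds (s := Set.Ioi (0:ℝ)))
    simpa using this
  exact ge_of_tendsto tends (eventually_nhdsWithin_of_forall step)

end Stmt19Aux

theorem stmt19 {A : Type*} [Ring A] [Algebra ℝ A]
    [TopologicalSpace A] [IsTopologicalRing A] [ContinuousSMul ℝ A]
    [LocallyConvexSpace ℝ A]
    (p q : Seminorm ℝ A) (hp : Continuous p) (hq : Continuous q) :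
    -- `max (p a) (p b) ≤ p_ℂ (a + i b) ≤ p a + p b`
    (∀ a b : A,
      max (p a) (p b) ≤ seminormC p ((1 : ℂ) ⊗ₜ[ℝ] a + Complex.I ⊗ₜ[ℝ] b) ∧
      seminormC p ((1 : ℂ) ⊗ₜ[ℝ] a + Complex.I ⊗ₜ[ℝ] b) ≤ p a + p b) ∧
    -- `‖(μ_n)_ℂ‖_{p_ℂ,q_ℂ} = ‖μ_n‖_{p,q}`
    (∀ n : ℕ, muNormF (seminormC p) (seminormC q) n =
      muNormF (fun x : A => p x) (fun x : A => q x) n) ∧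
    -- in particular, condition (*) passes to the complexification
    (∀ r : ℝ, 0 < r →
      (∑' n : ℕ, ENNReal.ofReal r ^ (n + 1) *
        muNormF (fun x : A => p x) (fun x : A => q x) (n + 1)) ≠ ⊤ →
      (∑' n : ℕ, ENNReal.ofReal r ^ (n + 1) *
        muNormF (seminormC p) (seminormC q) (n + 1)) ≠ ⊤) := by
  have part2 : ∀ n : ℕ, muNormF (seminormC p) (seminormC q) n =
      muNormF (fun x : A => p x) (fun x : A => q x) n := by
    intro n
    refine le_antisymm ?_ ?_
    · by_cases hM : muNormF (fun x : A => p x) (fun x : A => q x) n = ⊤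
      · rw [hM]; exact le_top
      · rw [muNormF]
        refine iSup_le fun s => ?_
        have hkey := Stmt19Aux.key_c p q n hM s.1 s.2
        calc ENNReal.ofReal (seminormC p (List.ofFn s.1).prod)
            ≤ ENNReal.ofReal (muNormF (fun x : A => p x) (fun x : A => q x) n).toReal :=
              ENNReal.ofReal_le_ofReal hkey
          _ = muNormF (fun x : A => p x) (fun x : A => q x) n := ENNReal.ofReal_toReal hM
    · unfold muNormF
      refine iSup_le fun s => ?_
      have hx : ∀ i, seminormC q ((1 : ℂ) ⊗ₜ[ℝ] s.1 i) ≤ 1 := fun i =>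
        (Stmt19Aux.seminormC_tmul_le q 1 (s.1 i)).trans (by simpa using s.2 i)
      refine le_iSup_of_le ⟨fun i => (1 : ℂ) ⊗ₜ[ℝ] s.1 i, hx⟩ ?_
      refine ENNReal.ofReal_le_ofReal ?_
      have hpr : (List.ofFn fun i => (1 : ℂ) ⊗ₜ[ℝ] s.1 i).prod
          = (1 : ℂ) ⊗ₜ[ℝ] (List.ofFn s.1).prod := by
        rw [Stmt19Aux.listProd_tmul]; simp
      rw [hpr]
      exact Stmt19Aux.p_le_seminormC_tmul_one p _
  refine ⟨fun a b => ⟨?_, ?_⟩, part2, fun r hr h => ?_⟩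
  · exact max_le (Stmt19Aux.p_le_seminormC_re p a b) (Stmt19Aux.p_le_seminormC_im p a b)
  · have h := Stmt19Aux.seminormC_le_sum p ![1, Complex.I] ![a, b]
    simpa [Fin.sum_univ_two] using h
  · simpa only [part2] using h
end
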